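/- Let C ∈ ℝ^{p×p} be symmetric positive definite with block decomposition C = [[C11, C12],[C21, C22]], C11 of size p0×p0. Let W ∈ ℝ^p with first p0 coordinates W^{(1)}, λ > 0, γ_j > 0, and s_j ∈ {-1,+1} for j ≤ p0. Suppose u^{(1)} = C11^{-1}[W^{(1)} - (λ/(2√n)) (s_1 γ_1, ..., s_{p0} γ_{p0})'] and suppose that for each j ≤ p0, sgn(β̂_j + u^{(1)}_j/√n) = s_j with β̂_j ≠ -u^{(1)}_j/√n, and for each j > p0, |(C21 u^{(1)})_j - W_j| ≤ (λ/(2√n)) γ_j. Then u = (u^{(1)'}, 0')' minimizes v ↦ v'Cv - 2v'W + λ Σ_{j=1}^p γ_j (|β̂_j + v_j/√n| - |β̂_j|), where β̂_j = 0 for j > p0. -/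

import Mathlib

open Matrix Finset

private lemma abs_eq_sign_mul {y s : ℝ} (h : Real.sign y = s) : |y| = s * y := by
  rcases lt_trichotomy y 0 with hy | hy | hy
  · rw [Real.sign_of_neg hy] at h
    rw [abs_of_neg hy, ← h]; ring
  · simp [hy]
  · rw [Real.sign_of_pos hy] at h
    rw [abs_of_pos hy, ← h]; ring

private lemma sign_mul_le_abs {s : ℝ} (hs : s = 1 ∨ s = -1) (x : ℝ) : s * x ≤ |x| := by
  rcases hs with h | h <;> simp [h]
  · exact le_abs_self x
  · exact neg_le_abs x

theorem stmt11 (p0 p1 n : ℕ) (hn : 1 ≤ n)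
    (C : Matrix (Fin p0 ⊕ Fin p1) (Fin p0 ⊕ Fin p1) ℝ) (hC : C.PosDef)
    (W : Fin p0 ⊕ Fin p1 → ℝ) (lam : ℝ) (hlam : 0 < lam)
    (γ : Fin p0 ⊕ Fin p1 → ℝ) (hγ : ∀ j, 0 < γ j)
    (s : Fin p0 → ℝ) (hs : ∀ j, s j = 1 ∨ s j = -1)
    (βhat : Fin p0 ⊕ Fin p1 → ℝ) (hβ0 : ∀ j, βhat (Sum.inr j) = 0)
    (C11 : Matrix (Fin p0) (Fin p0) ℝ)
    (hC11 : ∀ i j, C11 i j = C (Sum.inl i) (Sum.inl j))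
    (C21 : Matrix (Fin p1) (Fin p0) ℝ)
    (hC21 : ∀ i j, C21 i j = C (Sum.inr i) (Sum.inl j))
    (u1 : Fin p0 → ℝ)
    (hu1 : u1 = C11⁻¹.mulVec
      (fun j => W (Sum.inl j) - lam / (2 * Real.sqrt n) * (s j * γ (Sum.inl j))))
    (hsgn : ∀ j, Real.sign (βhat (Sum.inl j) + u1 j / Real.sqrt n) = s j)
    (hne : ∀ j, βhat (Sum.inl j) ≠ -(u1 j / Real.sqrt n))
    (hinact : ∀ j, |C21.mulVec u1 j - W (Sum.inr j)|
      ≤ lam / (2 * Real.sqrt n) * γ (Sum.inr j))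
    (f : (Fin p0 ⊕ Fin p1 → ℝ) → ℝ)
    (hf : ∀ v, f v = v ⬝ᵥ C.mulVec v - 2 * (v ⬝ᵥ W)
        + lam * ∑ j, γ j * (|βhat j + v j / Real.sqrt n| - |βhat j|)) :
    ∀ v, f (Sum.elim u1 fun _ => 0) ≤ f v := by
  intro v
  have hnpos : (0 : ℝ) < Real.sqrt n :=
    Real.sqrt_pos.mpr (by exact_mod_cast Nat.lt_of_lt_of_le Nat.zero_lt_one hn)
  set u : Fin p0 ⊕ Fin p1 → ℝ := Sum.elim u1 fun _ => 0 with hu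
  -- symmetry of C entries
  have hCsym : ∀ i j, C i j = C j i := by
    intro i j
    simpa using hC.1.apply j i
  -- C11 is positive definite
  have hC11pd : C11.PosDef := by
    refine PosDef.of_dotProduct_mulVec_pos ?_ ?_
    · ext i j
      simp only [conjTranspose_apply, hC11, star_trivial]
      exact hCsym _ _
    · intro x hx
      have hx' : (Sum.elim x (fun _ : Fin p1 => (0:ℝ))) ≠ 0 := by
        intro h
        apply hx
        funext i
        exact congrFun h (Sum.inl i)
      have := hC.dotProduct_mulVec_pos hx'
      have heq : (star (Sum.elim x (fun _ : Fin p1 => (0:ℝ)))) ⬝ᵥ (C *ᵥ (Sum.elim x (fun _ : Fin p1 => (0:ℝ))))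
          = (star x) ⬝ᵥ (C11 *ᵥ x) := by
        simp only [star_trivial, dotProduct, mulVec, Fintype.sum_sum_type, Sum.elim_inl,
          Sum.elim_inr, mul_zero, zero_mul, Finset.sum_const_zero, add_zero, hC11]
      rw [heq] at this
      exact this
  -- C11 mulVec u1
  have hC11u1 : C11 *ᵥ u1 =
      fun j => W (Sum.inl j) - lam / (2 * Real.sqrt n) * (s j * γ (Sum.inl j)) := by
    rw [hu1, mulVec_mulVec, mul_nonsing_inv _ (isUnit_iff_ne_zero.mpr hC11pd.det_pos.ne'),
      one_mulVec]
  -- C *ᵥ u at each coordinate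
  have hCu_inl : ∀ i, (C *ᵥ u) (Sum.inl i) = (C11 *ᵥ u1) i := by
    intro i
    simp only [mulVec, dotProduct, Fintype.sum_sum_type, hu, Sum.elim_inl, Sum.elim_inr,
      mul_zero, Finset.sum_const_zero, add_zero, hC11]
  have hCu_inr : ∀ i, (C *ᵥ u) (Sum.inr i) = (C21 *ᵥ u1) i := by
    intro i
    simp only [mulVec, dotProduct, Fintype.sum_sum_type, hu, Sum.elim_inl, Sum.elim_inr,
      mul_zero, Finset.sum_const_zero, add_zero, hC21]
  -- quadratic identity
  have hsym : (u ⬝ᵥ (C *ᵥ v)) = (v ⬝ᵥ (C *ᵥ u)) := by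
    simp only [dotProduct, mulVec, Finset.mul_sum]
    rw [Finset.sum_comm]
    refine Finset.sum_congr rfl fun i _ => Finset.sum_congr rfl fun j _ => ?_
    rw [hCsym j i]; ring
  have hQ : 0 ≤ (v - u) ⬝ᵥ (C *ᵥ (v - u)) := by
    have := hC.posSemidef.dotProduct_mulVec_nonneg (v - u)
    simpa using this
  -- main decomposition
  rw [hf, hf]
  have key : v ⬝ᵥ (C *ᵥ v) - u ⬝ᵥ (C *ᵥ u) - 2 * ((v - u) ⬝ᵥ (C *ᵥ u))
      = (v - u) ⬝ᵥ (C *ᵥ (v - u)) := by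
    simp only [mulVec_sub, dotProduct_sub, sub_dotProduct]
    rw [hsym]; ring
  -- it suffices to show the linear + penalty part is nonneg
  have hsum : 0 ≤ ∑ j, (2 * (v j - u j) * ((C *ᵥ u) j - W j)
      + lam * (γ j * (|βhat j + v j / Real.sqrt n| - |βhat j + u j / Real.sqrt n|))) := by
    apply Finset.sum_nonneg
    intro j _
    rcases j with j | j
    · -- active coordinate
      have hgrad : (C *ᵥ u) (Sum.inl j) - W (Sum.inl j)
          = -(lam / (2 * Real.sqrt n) * (s j * γ (Sum.inl j))) := by
        rw [hCu_inl, hC11u1]; ring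
      have habs1 : |βhat (Sum.inl j) + u (Sum.inl j) / Real.sqrt n|
          = s j * (βhat (Sum.inl j) + u1 j / Real.sqrt n) := by
        rw [hu]; exact abs_eq_sign_mul (hsgn j)
      have habs2 : s j * (βhat (Sum.inl j) + v (Sum.inl j) / Real.sqrt n)
          ≤ |βhat (Sum.inl j) + v (Sum.inl j) / Real.sqrt n| :=
        sign_mul_le_abs (hs j) _
      have hγj := (hγ (Sum.inl j)).le
      have hu_inl : u (Sum.inl j) = u1 j := rfl
      rw [hgrad, habs1, hu_inl]
      have expand : 2 * (v (Sum.inl j) - u1 j) *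
            -(lam / (2 * Real.sqrt n) * (s j * γ (Sum.inl j)))
          + lam * (γ (Sum.inl j) * (s j * (βhat (Sum.inl j) + v (Sum.inl j) / Real.sqrt n)
              - s j * (βhat (Sum.inl j) + u1 j / Real.sqrt n))) = 0 := by
        field_simp
        ring
      have mono : lam * (γ (Sum.inl j) * (s j * (βhat (Sum.inl j) + v (Sum.inl j) / Real.sqrt n)
              - s j * (βhat (Sum.inl j) + u1 j / Real.sqrt n)))
          ≤ lam * (γ (Sum.inl j) * (|βhat (Sum.inl j) + v (Sum.inl j) / Real.sqrt n|
              - s j * (βhat (Sum.inl j) + u1 j / Real.sqrt n))) := by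
        apply mul_le_mul_of_nonneg_left _ hlam.le
        apply mul_le_mul_of_nonneg_left _ hγj
        exact sub_le_sub_right habs2 _
      linarith [expand, mono]
    · -- inactive coordinate
      have hu_inr : u (Sum.inr j) = 0 := rfl
      have hb := hβ0 j
      rw [hu_inr, hb, hCu_inr]
      simp only [zero_add, sub_zero, zero_div, add_zero, abs_zero]
      have h1 : -(2 * v (Sum.inr j) * ((C21 *ᵥ u1) j - W (Sum.inr j)))
          ≤ 2 * |v (Sum.inr j)| * (lam / (2 * Real.sqrt n) * γ (Sum.inr j)) := by
        calc -(2 * v (Sum.inr j) * ((C21 *ᵥ u1) j - W (Sum.inr j)))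
            ≤ |2 * v (Sum.inr j) * ((C21 *ᵥ u1) j - W (Sum.inr j))| := neg_le_abs _
          _ = 2 * |v (Sum.inr j)| * |(C21 *ᵥ u1) j - W (Sum.inr j)| := by
              rw [abs_mul, abs_mul]; simp
          _ ≤ 2 * |v (Sum.inr j)| * (lam / (2 * Real.sqrt n) * γ (Sum.inr j)) := by
              apply mul_le_mul_of_nonneg_left (hinact j)
              positivity
      have h2 : 2 * |v (Sum.inr j)| * (lam / (2 * Real.sqrt n) * γ (Sum.inr j))
          = lam * (γ (Sum.inr j) * |v (Sum.inr j) / Real.sqrt n|) := by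
        rw [abs_div, abs_of_pos hnpos]
        field_simp
      linarith [h1, h2.symm.le]
  -- combine
  have hdot : (v - u) ⬝ᵥ ((C *ᵥ u) - W) * 2
      = ∑ j, 2 * (v j - u j) * ((C *ᵥ u) j - W j) := by
    simp only [dotProduct, Pi.sub_apply, Finset.sum_mul]
    exact Finset.sum_congr rfl fun j _ => by ring
  have hpen : lam * ∑ j, γ j * (|βhat j + v j / Real.sqrt n| - |βhat j|)
      - lam * ∑ j, γ j * (|βhat j + u j / Real.sqrt n| - |βhat j|)
      = ∑ j, lam * (γ j * (|βhat j + v j / Real.sqrt n| - |βhat j + u j / Real.sqrt n|)) := by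
    rw [← mul_sub, ← Finset.sum_sub_distrib, Finset.mul_sum]
    exact Finset.sum_congr rfl fun j _ => by ring
  have hWlin : v ⬝ᵥ W - u ⬝ᵥ W = (v - u) ⬝ᵥ W := by
    rw [sub_dotProduct]
  have hlin : (v - u) ⬝ᵥ ((C *ᵥ u) - W) = (v - u) ⬝ᵥ (C *ᵥ u) - (v - u) ⬝ᵥ W := by
    rw [dotProduct_sub]
  have htotal : 0 ≤ (v - u) ⬝ᵥ (C *ᵥ (v - u))
      + ∑ j, (2 * (v j - u j) * ((C *ᵥ u) j - W j)
        + lam * (γ j * (|βhat j + v j / Real.sqrt n| - |βhat j + u j / Real.sqrt n|))) :=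
    add_nonneg hQ hsum
  rw [Finset.sum_add_distrib] at htotal
  have e1 := hdot
  have e2 := hpen
  nlinarith [key, htotal, e1, e2, hlin, hWlin, sub_dotProduct v u W]
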